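/- (Lemma 2.2) Let a, b, c be real numbers with a·c·(b²−4ac) ≠ 0, let n ≥ 1, and let f(x,y), g(x,y) be real polynomials of (total) degree at most n. Then there exist real polynomials f₁, f₂, f₃, f₄, f₅, g₁, g₂, l₁, l₂ with deg f₁ ≤ ⌊(n−1)/4⌋, deg f₂, deg f₃, deg f₅ ≤ ⌊(n−3)/4⌋, deg f₄ ≤ ⌊(n−1)/4⌋ − 1, deg g₁, deg l₁ ≤ ⌊(n−2)/4⌋, and deg g₂, deg l₂ ≤ ⌊n/4⌋ − 1, such that for every h ∈ ℝ and every closed curve γ at level h of H: ∫₀ᵀ [ g(x(t),y(t))·x'(t) − f(x(t),y(t))·y'(t) ] dt = f₁(h)I_{0,1}(γ) + f₂(h)I_{0,3}(γ) + f₃(h)I_{2,1}(γ) + f₄(h)I_{2,3}(γ) + f₅(h)I_{1,2}(γ) + g₁(h)I_{1,1}(γ) + g₂(h)I_{1,3}(γ) + l₁(h)I_{0,2}(γ) + l₂(h)I_{2,2}(γ). -/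

import Mathlib

noncomputable def Hfun (a b c x y : ℝ) : ℝ :=
  x ^ 2 - y ^ 2 + a * x ^ 4 + c * y ^ 4 + b * x ^ 2 * y ^ 2

noncomputable def lineInt (x y : ℝ → ℝ) (T : ℝ) (i j : ℕ) : ℝ :=
  ∫ t in (0:ℝ)..T, x t ^ i * y t ^ j * deriv x t

noncomputable def lineIntY (x y : ℝ → ℝ) (T : ℝ) (i j : ℕ) : ℝ :=
  ∫ t in (0:ℝ)..T, x t ^ i * y t ^ j * deriv y t

def IsCurve (a b c h : ℝ) (x y : ℝ → ℝ) (T : ℝ) : Prop :=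
  ContDiff ℝ 1 x ∧ ContDiff ℝ 1 y ∧ (∀ t, x (t + T) = x t ∧ y (t + T) = y t) ∧
    (∀ t, Hfun a b c (x t) (y t) = h)

section CurveAux

variable {a b c h : ℝ} {x y : ℝ → ℝ} {T : ℝ}

lemma IsCurve.cx (hC : IsCurve a b c h x y T) : Continuous x := hC.1.continuous
lemma IsCurve.cy (hC : IsCurve a b c h x y T) : Continuous y := hC.2.1.continuous
lemma IsCurve.cdx (hC : IsCurve a b c h x y T) : Continuous (deriv x) :=
  hC.1.continuous_deriv le_rfl
lemma IsCurve.cdy (hC : IsCurve a b c h x y T) : Continuous (deriv y) :=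
  hC.2.1.continuous_deriv le_rfl
lemma IsCurve.dx (hC : IsCurve a b c h x y T) (t : ℝ) : HasDerivAt x (deriv x t) t :=
  ((hC.1.differentiable one_ne_zero) t).hasDerivAt
lemma IsCurve.dy (hC : IsCurve a b c h x y T) (t : ℝ) : HasDerivAt y (deriv y t) t :=
  ((hC.2.1.differentiable one_ne_zero) t).hasDerivAt

lemma IsCurve.contI (hC : IsCurve a b c h x y T) (i j : ℕ) (u : Bool) :
    Continuous fun t => x t ^ i * y t ^ j * deriv (if u then x else y) t := by
  cases u <;>
    exact ((hC.cx.pow i).mul (hC.cy.pow j)).mul (by simp [hC.cdx, hC.cdy])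

/-- workhorse: a linear combination of the basic line integrals equals the integral of the
corresponding combined integrand. -/
lemma integral_comb (hC : IsCurve a b c h x y T) {N : ℕ} (r : Fin N → ℝ) (u : Fin N → Bool)
    (ii jj : Fin N → ℕ) :
    (∑ k, r k * (if u k then lineInt x y T (ii k) (jj k) else lineIntY x y T (ii k) (jj k)))
      = ∫ t in (0:ℝ)..T, ∑ k,
          r k * (x t ^ ii k * y t ^ jj k * deriv (if u k then x else y) t) := by
  rw [intervalIntegral.integral_finset_sum]
  · refine Finset.sum_congr rfl fun k _ => ?_
    rw [intervalIntegral.integral_const_mul]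
    cases hu : u k <;> simp [hu, lineInt, lineIntY]
  · intro k _
    exact (continuous_const.mul (hC.contI (ii k) (jj k) (u k))).intervalIntegrable 0 T

lemma integral_exact (F G : ℝ → ℝ) (hd : ∀ t, HasDerivAt F (G t) t) (hGc : Continuous G)
    (hFT : F T = F 0) : (∫ t in (0:ℝ)..T, G t) = 0 := by
  rw [intervalIntegral.integral_eq_sub_of_hasDerivAt (fun t _ => hd t)
    (hGc.intervalIntegrable 0 T), hFT, sub_self]

lemma exact_pq (hC : IsCurve a b c h x y T) (p q : ℕ) :
    ((p:ℝ)+1) * lineInt x y T p (q+1) + ((q:ℝ)+1) * lineIntY x y T (p+1) q = 0 := by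
  have hcomb := integral_comb hC (N := 2) ![(p:ℝ)+1, (q:ℝ)+1] ![true, false]
      ![p, p+1] ![q+1, q]
  simp only [Fin.sum_univ_two, Matrix.cons_val_zero, Matrix.cons_val_one, Matrix.head_cons,
    if_true, if_false, Bool.false_eq_true] at hcomb
  rw [hcomb]
  refine integral_exact (fun t => x t ^ (p+1) * y t ^ (q+1)) _ (fun t => ?_) ?_ ?_
  · have hdF := ((hC.dx t).fun_pow (p+1)).fun_mul ((hC.dy t).fun_pow (q+1))
    refine hdF.congr_deriv ?_
    simp only [Nat.add_sub_cancel]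
    push_cast
    ring
  · exact (continuous_const.mul (hC.contI p (q+1) true)).add
      (continuous_const.mul (hC.contI (p+1) q false))
  · have h1 := (hC.2.2.1 0).1
    have h2 := (hC.2.2.1 0).2
    simp only [zero_add] at h1 h2
    simp [h1, h2]

@[simp] lemma cons_val_five {α : Type*} (a₀ a₁ a₂ a₃ a₄ a₅ : α) :
    ![a₀,a₁,a₂,a₃,a₄,a₅] 5 = a₅ := rfl

lemma exact_x (hC : IsCurve a b c h x y T) (i : ℕ) : lineInt x y T i 0 = 0 := by
  have hcomb := integral_comb hC (N := 1) ![(i:ℝ)+1] ![true] ![i] ![0]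
  simp only [Fin.sum_univ_one, Matrix.cons_val_zero, if_true] at hcomb
  have hz : (∫ t in (0:ℝ)..T, ((i:ℝ)+1) * (x t ^ i * y t ^ 0 * deriv x t)) = 0 := by
    refine integral_exact (fun t => x t ^ (i+1)) _ (fun t => ?_) ?_ ?_
    · have hdF := (hC.dx t).fun_pow (i+1)
      refine hdF.congr_deriv ?_
      simp only [Nat.add_sub_cancel]
      push_cast
      ring
    · exact continuous_const.mul (hC.contI i 0 true)
    · have h1 := (hC.2.2.1 0).1
      simp only [zero_add] at h1
      simp [h1]
  rw [hz] at hcomb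
  have hi : ((i:ℝ)+1) ≠ 0 := by positivity
  exact (mul_eq_zero.mp hcomb).resolve_left hi

lemma exact_y0 (hC : IsCurve a b c h x y T) (j : ℕ) : lineIntY x y T 0 j = 0 := by
  have hcomb := integral_comb hC (N := 1) ![(j:ℝ)+1] ![false] ![0] ![j]
  simp only [Fin.sum_univ_one, Matrix.cons_val_zero, if_false, Bool.false_eq_true] at hcomb
  have hz : (∫ t in (0:ℝ)..T, ((j:ℝ)+1) * (x t ^ 0 * y t ^ j * deriv y t)) = 0 := by
    refine integral_exact (fun t => y t ^ (j+1)) _ (fun t => ?_) ?_ ?_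
    · have hdF := (hC.dy t).fun_pow (j+1)
      refine hdF.congr_deriv ?_
      simp only [Nat.add_sub_cancel]
      push_cast
      ring
    · exact continuous_const.mul (hC.contI 0 j false)
    · have h1 := (hC.2.2.1 0).2
      simp only [zero_add] at h1
      simp [h1]
  rw [hz] at hcomb
  have hj : ((j:ℝ)+1) ≠ 0 := by positivity
  exact (mul_eq_zero.mp hcomb).resolve_left hj

lemma convJY (hC : IsCurve a b c h x y T) (i q : ℕ) :
    ((q:ℝ)+1) * lineIntY x y T i q + (i:ℝ) * lineInt x y T (i-1) (q+1) = 0 := by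
  cases i with
  | zero => simp [exact_y0 hC q]
  | succ p =>
      have hpq := exact_pq hC p q
      push_cast [Nat.add_sub_cancel]
      linarith [hpq]

lemma JY_eq (hC : IsCurve a b c h x y T) (i q : ℕ) :
    lineIntY x y T i q = -((i:ℝ)/((q:ℝ)+1)) * lineInt x y T (i-1) (q+1) := by
  have hq : ((q:ℝ)+1) ≠ 0 := by positivity
  have := convJY hC i q
  field_simp
  linarith [this]

lemma relB (hC : IsCurve a b c h x y T) (i j : ℕ) :
    c * lineInt x y T i (j+4) - h * lineInt x y T i j + lineInt x y T (i+2) j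
      - lineInt x y T i (j+2) + a * lineInt x y T (i+4) j
      + b * lineInt x y T (i+2) (j+2) = 0 := by
  have hcomb := integral_comb hC (N := 6) ![c, -h, 1, -1, a, b] ![true,true,true,true,true,true]
      ![i,i,i+2,i,i+4,i+2] ![j+4,j,j,j+2,j,j+2]
  simp only [Fin.sum_univ_six, Matrix.cons_val_zero, Matrix.cons_val_one, Matrix.head_cons,
    Matrix.cons_val_two, Matrix.cons_val_three, Matrix.cons_val_four, Matrix.tail_cons,
    cons_val_five, if_true] at hcomb
  have hz : (∫ t in (0:ℝ)..T,
      (c * (x t ^ i * y t ^ (j+4) * deriv x t) + -h * (x t ^ i * y t ^ j * deriv x t)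
        + 1 * (x t ^ (i+2) * y t ^ j * deriv x t) + -1 * (x t ^ i * y t ^ (j+2) * deriv x t)
        + a * (x t ^ (i+4) * y t ^ j * deriv x t)
        + b * (x t ^ (i+2) * y t ^ (j+2) * deriv x t))) = 0 := by
    have hptw : ∀ t : ℝ,
        (c * (x t ^ i * y t ^ (j+4) * deriv x t) + -h * (x t ^ i * y t ^ j * deriv x t)
        + 1 * (x t ^ (i+2) * y t ^ j * deriv x t) + -1 * (x t ^ i * y t ^ (j+2) * deriv x t)
        + a * (x t ^ (i+4) * y t ^ j * deriv x t)
        + b * (x t ^ (i+2) * y t ^ (j+2) * deriv x t)) = 0 := by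
      intro t
      have hl := hC.2.2.2 t
      simp only [Hfun] at hl
      linear_combination (x t ^ i * y t ^ j * deriv x t) * hl
    simp only [hptw, intervalIntegral.integral_zero]
  rw [hz] at hcomb
  linarith [hcomb]

lemma hasDerivH (hC : IsCurve a b c h x y T) (t : ℝ) :
    (2 * x t + 4*a*x t^3 + 2*b*x t*y t^2) * deriv x t
      + (-(2*y t) + 4*c*y t^3 + 2*b*x t^2*y t) * deriv y t = 0 := by
  have h1 : HasDerivAt (fun s => Hfun a b c (x s) (y s))
      ((2 * x t + 4*a*x t^3 + 2*b*x t*y t^2) * deriv x t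
        + (-(2*y t) + 4*c*y t^3 + 2*b*x t^2*y t) * deriv y t) t := by
    simp only [Hfun]
    have hx2 := (hC.dx t).fun_pow 2
    have hy2 := (hC.dy t).fun_pow 2
    have hx4 := (hC.dx t).fun_pow 4
    have hy4 := (hC.dy t).fun_pow 4
    have hd := ((((hx2.fun_sub hy2).fun_add (hx4.const_mul a)).fun_add (hy4.const_mul c)).fun_add
      ((hx2.const_mul b).fun_mul hy2))
    refine hd.congr_deriv ?_
    norm_num
    ring
  have h2 : HasDerivAt (fun s => Hfun a b c (x s) (y s)) 0 t := by
    have : (fun s => Hfun a b c (x s) (y s)) = fun _ => h := funext hC.2.2.2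
    rw [this]
    exact hasDerivAt_const _ _
  exact h1.unique h2

lemma relDH (hC : IsCurve a b c h x y T) (i j : ℕ) :
    2 * lineInt x y T (i+1) j + 4*a * lineInt x y T (i+3) j + 2*b * lineInt x y T (i+1) (j+2)
      - 2 * lineIntY x y T i (j+1) + 4*c * lineIntY x y T i (j+3)
      + 2*b * lineIntY x y T (i+2) (j+1) = 0 := by
  have hcomb := integral_comb hC (N := 6) ![2, 4*a, 2*b, -2, 4*c, 2*b]
      ![true,true,true,false,false,false] ![i+1,i+3,i+1,i,i,i+2] ![j,j,j+2,j+1,j+3,j+1]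
  simp only [Fin.sum_univ_six, Matrix.cons_val_zero, Matrix.cons_val_one, Matrix.head_cons,
    Matrix.cons_val_two, Matrix.cons_val_three, Matrix.cons_val_four, Matrix.tail_cons,
    cons_val_five, if_true, if_false, Bool.false_eq_true] at hcomb
  have hz : (∫ t in (0:ℝ)..T,
      (2 * (x t ^ (i+1) * y t ^ j * deriv x t) + 4*a * (x t ^ (i+3) * y t ^ j * deriv x t)
       + 2*b * (x t ^ (i+1) * y t ^ (j+2) * deriv x t) + -2 * (x t ^ i * y t ^ (j+1) * deriv y t)
       + 4*c * (x t ^ i * y t ^ (j+3) * deriv y t)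
       + 2*b * (x t ^ (i+2) * y t ^ (j+1) * deriv y t))) = 0 := by
    have hptw : ∀ t : ℝ,
        (2 * (x t ^ (i+1) * y t ^ j * deriv x t) + 4*a * (x t ^ (i+3) * y t ^ j * deriv x t)
       + 2*b * (x t ^ (i+1) * y t ^ (j+2) * deriv x t) + -2 * (x t ^ i * y t ^ (j+1) * deriv y t)
       + 4*c * (x t ^ i * y t ^ (j+3) * deriv y t)
       + 2*b * (x t ^ (i+2) * y t ^ (j+1) * deriv y t)) = 0 := by
      intro t
      linear_combination (x t ^ i * y t ^ j) * hasDerivH hC t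
    simp only [hptw, intervalIntegral.integral_zero]
  rw [hz] at hcomb
  linarith [hcomb]

lemma relA (hC : IsCurve a b c h x y T) (i j : ℕ) :
    4*a*((j:ℝ)+2)*((j:ℝ)+4) * lineInt x y T (i+3) j
      + 2*((j:ℝ)+2)*((j:ℝ)+4) * lineInt x y T (i+1) j
      + (2*b*((j:ℝ)+2)*((j:ℝ)+4) - 2*b*((i:ℝ)+2)*((j:ℝ)+4)) * lineInt x y T (i+1) (j+2)
      + 2*(i:ℝ)*((j:ℝ)+4) * lineInt x y T (i-1) (j+2)
      - 4*c*(i:ℝ)*((j:ℝ)+2) * lineInt x y T (i-1) (j+4) = 0 := by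
  have hDH := relDH hC i j
  have hc1 := convJY hC i (j+1)
  have hc2 := convJY hC i (j+3)
  have hc3 := convJY hC (i+2) (j+1)
  simp only [Nat.add_sub_cancel, show j+1+1 = j+2 from rfl, show j+3+1 = j+4 from rfl]
    at hc1 hc2 hc3
  push_cast at hc1 hc2 hc3 ⊢
  linear_combination (norm := (push_cast; ring1))
    ((j:ℝ)+2)*((j:ℝ)+4) * hDH + 2*((j:ℝ)+4) * hc1 + (-(4*c*((j:ℝ)+2))) * hc2
      + (-(2*b*((j:ℝ)+4))) * hc3

end CurveAux

section RedMachinery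

abbrev Fam := Fin 3 → Fin 3 → Polynomial ℝ

def famOK (A : Fam) (d : ℕ) : Prop :=
  ∀ p q : Fin 3, ∀ k : ℕ, (A p q).coeff k ≠ 0 → 4*k + (p:ℕ) + (q:ℕ) + 1 ≤ d

noncomputable def evalFam (A : Fam) (h : ℝ) (x y : ℝ → ℝ) (T : ℝ) : ℝ :=
  ∑ p : Fin 3, ∑ q : Fin 3, (A p q).eval h * lineInt x y T (p:ℕ) ((q:ℕ)+1)

def Red (a b c : ℝ) (i j : ℕ) : Prop :=
  ∃ A : Fam, famOK A (i+j) ∧ ∀ h x y T, IsCurve a b c h x y T →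
    lineInt x y T i j = evalFam A h x y T

lemma famOK_mono {A : Fam} {d d' : ℕ} (hd : d ≤ d') (hA : famOK A d) : famOK A d' :=
  fun p q k hk => le_trans (hA p q k hk) hd

lemma fam_sum {a b c : ℝ} {ι : Type*} [DecidableEq ι] (s : Finset ι) (n : ℕ)
    (co : ι → Polynomial ℝ) (ii jj : ι → ℕ)
    (hco : ∀ k ∈ s, ∀ m : ℕ, (co k).coeff m ≠ 0 → 4*m + ii k + jj k ≤ n)
    (hred : ∀ k ∈ s, co k ≠ 0 → Red a b c (ii k) (jj k)) :
    ∃ A : Fam, famOK A n ∧ ∀ h x y T, IsCurve a b c h x y T →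
      (∑ k ∈ s, (co k).eval h * lineInt x y T (ii k) (jj k)) = evalFam A h x y T := by
  classical
  induction s using Finset.induction with
  | empty =>
      refine ⟨0, fun p q k hk => absurd (by simp : ((0:Fam) p q).coeff k = 0) hk,
        fun h x y T hC => ?_⟩
      simp [evalFam]
  | insert k s hk ih =>
      obtain ⟨A₀, hA₀, hid₀⟩ := ih (fun k hks => hco k (Finset.mem_insert_of_mem hks))
        (fun k hks => hred k (Finset.mem_insert_of_mem hks))
      by_cases hzero : co k = 0
      · refine ⟨A₀, hA₀, fun h x y T hC => ?_⟩
        rw [Finset.sum_insert hk, hzero]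
        simp only [Polynomial.eval_zero, zero_mul, zero_add]
        exact hid₀ h x y T hC
      · obtain ⟨B, hB, hidB⟩ := hred k (Finset.mem_insert_self k s) hzero
        refine ⟨fun p q => co k * B p q + A₀ p q, ?_, fun h x y T hC => ?_⟩
        · intro p q m hm
          rcases (by by_contra hcon; push_neg at hcon
                     simp [Polynomial.coeff_add, hcon.1, hcon.2] at hm :
              (co k * B p q).coeff m ≠ 0 ∨ (A₀ p q).coeff m ≠ 0) with hm1 | hm2
          · rw [Polynomial.coeff_mul] at hm1
            obtain ⟨uv, huv, hne⟩ := Finset.exists_ne_zero_of_sum_ne_zero hm1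
            have h1 : (co k).coeff uv.1 ≠ 0 := fun hc => hne (by simp [hc])
            have h2 : (B p q).coeff uv.2 ≠ 0 := fun hc => hne (by simp [hc])
            have hb1 := hco k (Finset.mem_insert_self k s) uv.1 h1
            have hb2 := hB p q uv.2 h2
            have huv' : uv.1 + uv.2 = m := Finset.HasAntidiagonal.mem_antidiagonal.mp huv
            omega
          · exact hA₀ p q m hm2
        · rw [Finset.sum_insert hk, hidB h x y T hC]
          have : evalFam (fun p q => co k * B p q + A₀ p q) h x y T
              = (∑ p : Fin 3, ∑ q : Fin 3,
                  (co k).eval h * ((B p q).eval h * lineInt x y T (p:ℕ) ((q:ℕ)+1)))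
                + evalFam A₀ h x y T := by
            simp only [evalFam, ← Finset.sum_add_distrib]
            refine Finset.sum_congr rfl fun p _ => Finset.sum_congr rfl fun q _ => ?_
            simp only [Polynomial.eval_add, Polynomial.eval_mul]
            ring
          rw [this, hid₀ h x y T hC]
          congr 1
          rw [evalFam, Finset.mul_sum]
          exact Finset.sum_congr rfl fun p _ => Finset.mul_sum _ _ _

lemma red_of_rel {a b c : ℝ} (i j : ℕ) {ι : Type*} [DecidableEq ι] (s : Finset ι)
    (co : ι → Polynomial ℝ) (ii jj : ι → ℕ)
    (hco : ∀ k ∈ s, ∀ m : ℕ, (co k).coeff m ≠ 0 → 4*m + ii k + jj k ≤ i + j)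
    (hred : ∀ k ∈ s, co k ≠ 0 → Red a b c (ii k) (jj k))
    (hrel : ∀ h x y T, IsCurve a b c h x y T →
      lineInt x y T i j = ∑ k ∈ s, (co k).eval h * lineInt x y T (ii k) (jj k)) :
    Red a b c i j := by
  obtain ⟨A, h1, h2⟩ := fam_sum s (i+j) co ii jj hco hred
  exact ⟨A, h1, fun h x y T hC => (hrel h x y T hC).trans (h2 h x y T hC)⟩

lemma red_basis {a b c : ℝ} (p q : ℕ) (hp : p ≤ 2) (hq1 : 1 ≤ q) (hq3 : q ≤ 3) :
    Red a b c p q := by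
  refine ⟨fun p' q' => if ((p':ℕ) = p ∧ (q':ℕ)+1 = q) then 1 else 0, ?_, ?_⟩
  · intro p' q' k hk
    simp only at hk
    by_cases hcond : ((p':ℕ) = p ∧ (q':ℕ)+1 = q)
    · rw [if_pos hcond, Polynomial.coeff_one] at hk
      have : k = 0 := by by_contra hne; simp [hne] at hk
      omega
    · rw [if_neg hcond] at hk
      simp at hk
  · intro h x y T hC
    interval_cases p <;> interval_cases q <;>
      simp [evalFam, Fin.sum_univ_three]

lemma red_zero {a b c : ℝ} (i : ℕ) : Red a b c i 0 :=
  ⟨0, fun p q k hk => absurd (by simp : ((0:Fam) p q).coeff k = 0) hk,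
    fun h x y T hC => by simp [evalFam, exact_x hC i]⟩

end RedMachinery

section Branches

variable {a b c : ℝ}

lemma const_support {u : ℝ} {m : ℕ} (hm : (Polynomial.C u).coeff m ≠ 0) : m = 0 := by
  by_contra hne
  rw [Polynomial.coeff_C, if_neg hne] at hm
  exact hm rfl

lemma affine_support {u v : ℝ} {m : ℕ}
    (hm : (Polynomial.C u + Polynomial.C v * Polynomial.X).coeff m ≠ 0) : m ≤ 1 := by
  by_contra hgt
  push_neg at hgt
  have h0 : m ≠ 0 := by omega
  have h1 : m ≠ 1 := by omega
  rw [Polynomial.coeff_add, Polynomial.coeff_C, if_neg h0, Polynomial.coeff_C_mul,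
    Polynomial.coeff_X, if_neg (fun hh => h1 hh.symm)] at hm
  simp at hm

lemma cmulx_support {v : ℝ} {m : ℕ}
    (hm : (Polynomial.C v * Polynomial.X).coeff m ≠ 0) : m ≤ 1 := by
  by_contra hgt
  push_neg at hgt
  have h1 : m ≠ 1 := by omega
  rw [Polynomial.coeff_C_mul, Polynomial.coeff_X, if_neg (fun hh => h1 hh.symm)] at hm
  simp at hm

lemma mu_lt_left {i' j' i j : ℕ} (hd : i' + j' < i + j) :
    (i'+j')*((i'+j')+1) + i' < (i+j)*((i+j)+1) + i := by
  nlinarith [Nat.le_add_right i' j', Nat.zero_le i]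

lemma mu_lt_right {i' j' i j : ℕ} (hd : i' + j' = i + j) (hij : i' < i) :
    (i'+j')*((i'+j')+1) + i' < (i+j)*((i+j)+1) + i := by
  rw [hd]
  exact Nat.add_lt_add_left hij _

lemma branchA (ha : a ≠ 0) (i' j : ℕ)
    (R1 : Red a b c (i'+1) j) (R2 : Red a b c (i'+1) (j+2))
    (R3 : i' ≠ 0 → Red a b c (i'-1) (j+2)) (R4 : i' ≠ 0 → Red a b c (i'-1) (j+4)) :
    Red a b c (i'+3) j := by
  have hK : (4*a*((j:ℝ)+2)*((j:ℝ)+4)) ≠ 0 := by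
    have h2 : ((j:ℝ)+2) ≠ 0 := by positivity
    have h4 : ((j:ℝ)+4) ≠ 0 := by positivity
    have : (4:ℝ)*a ≠ 0 := by simpa using ha
    exact mul_ne_zero (mul_ne_zero this h2) h4
  refine red_of_rel (i'+3) j (Finset.univ : Finset (Fin 4))
    ![Polynomial.C ((4*a*((j:ℝ)+2)*((j:ℝ)+4))⁻¹ * (-2*((j:ℝ)+2)*((j:ℝ)+4))),
      Polynomial.C ((4*a*((j:ℝ)+2)*((j:ℝ)+4))⁻¹ * (-2*b*((j:ℝ)+4)*((j:ℝ)-(i':ℝ)))),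
      Polynomial.C ((4*a*((j:ℝ)+2)*((j:ℝ)+4))⁻¹ * (-2*(i':ℝ)*((j:ℝ)+4))),
      Polynomial.C ((4*a*((j:ℝ)+2)*((j:ℝ)+4))⁻¹ * (4*c*(i':ℝ)*((j:ℝ)+2)))]
    ![i'+1, i'+1, i'-1, i'-1] ![j, j+2, j+2, j+4] ?_ ?_ ?_
  · intro k _ m hm
    fin_cases k <;>
      simp only [Matrix.cons_val_zero, Matrix.cons_val_one, Matrix.head_cons,
        Matrix.cons_val_two, Matrix.cons_val_three, Matrix.tail_cons, Fin.isValue,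
        Fin.zero_eta, Fin.mk_one, Fin.reduceFinMk] at hm ⊢
    · have := const_support hm; omega
    · have := const_support hm; omega
    · have := const_support hm; omega
    · by_cases hi' : i' = 0
      · subst hi'; simp at hm
      · have := const_support hm; omega
  · intro k _ hne
    fin_cases k <;>
      simp only [Matrix.cons_val_zero, Matrix.cons_val_one, Matrix.head_cons,
        Matrix.cons_val_two, Matrix.cons_val_three, Matrix.tail_cons, Fin.isValue,
        Fin.zero_eta, Fin.mk_one, Fin.reduceFinMk] at hne ⊢
    · exact R1
    · exact R2
    · refine R3 (fun hi' => hne ?_)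
      subst hi'; simp
    · refine R4 (fun hi' => hne ?_)
      subst hi'; simp
  · intro h x y T hC
    have key : (4*a*((j:ℝ)+2)*((j:ℝ)+4)) * lineInt x y T (i'+3) j
        = (-2*((j:ℝ)+2)*((j:ℝ)+4)) * lineInt x y T (i'+1) j
          + (-2*b*((j:ℝ)+4)*((j:ℝ)-(i':ℝ))) * lineInt x y T (i'+1) (j+2)
          + (-2*(i':ℝ)*((j:ℝ)+4)) * lineInt x y T (i'-1) (j+2)
          + (4*c*(i':ℝ)*((j:ℝ)+2)) * lineInt x y T (i'-1) (j+4) := by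
      linear_combination (norm := (push_cast; ring1)) relA hC i' j
    have key2 : lineInt x y T (i'+3) j
        = (4*a*((j:ℝ)+2)*((j:ℝ)+4))⁻¹ * ((-2*((j:ℝ)+2)*((j:ℝ)+4)) * lineInt x y T (i'+1) j
          + (-2*b*((j:ℝ)+4)*((j:ℝ)-(i':ℝ))) * lineInt x y T (i'+1) (j+2)
          + (-2*(i':ℝ)*((j:ℝ)+4)) * lineInt x y T (i'-1) (j+2)
          + (4*c*(i':ℝ)*((j:ℝ)+2)) * lineInt x y T (i'-1) (j+4)) := by
      rw [← key, inv_mul_cancel_left₀ hK]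
    simp only [Fin.sum_univ_four, Matrix.cons_val_zero, Matrix.cons_val_one, Matrix.head_cons,
      Matrix.cons_val_two, Matrix.cons_val_three, Matrix.tail_cons, Polynomial.eval_C,
      Fin.isValue]
    linear_combination key2

lemma branchODD (hD : b^2 - 4*a*c ≠ 0) (q : ℕ)
    (R1 : Red a b c 1 q) (R2 : Red a b c 1 (q+2)) :
    Red a b c 1 (q+4) := by
  have hK : (((q:ℝ)+2)*((q:ℝ)+6)*(b^2 - 4*a*c)) ≠ 0 := by
    have h2 : ((q:ℝ)+2) ≠ 0 := by positivity
    have h6 : ((q:ℝ)+6) ≠ 0 := by positivity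
    exact mul_ne_zero (mul_ne_zero h2 h6) hD
  refine red_of_rel 1 (q+4) (Finset.univ : Finset (Fin 2))
    ![Polynomial.C ((((q:ℝ)+2)*((q:ℝ)+6)*(b^2 - 4*a*c))⁻¹ * (-(((q:ℝ)+2)*((q:ℝ)+4))))
        + Polynomial.C ((((q:ℝ)+2)*((q:ℝ)+6)*(b^2 - 4*a*c))⁻¹ * (-(4*a*((q:ℝ)+2)*((q:ℝ)+4))))
          * Polynomial.X,
      Polynomial.C ((((q:ℝ)+2)*((q:ℝ)+6)*(b^2 - 4*a*c))⁻¹ * (-(2*((q:ℝ)+3)*((q:ℝ)+4)*(b+2*a))))]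
    ![1, 1] ![q, q+2] ?_ ?_ ?_
  · intro k _ m hm
    fin_cases k <;>
      simp only [Matrix.cons_val_zero, Matrix.cons_val_one, Matrix.head_cons, Fin.isValue,
        Fin.zero_eta, Fin.mk_one, Fin.reduceFinMk] at hm ⊢
    · have := affine_support hm; omega
    · have := const_support hm; omega
  · intro k _ _
    fin_cases k <;>
      simp only [Matrix.cons_val_zero, Matrix.cons_val_one, Matrix.head_cons, Fin.isValue,
        Fin.zero_eta, Fin.mk_one, Fin.reduceFinMk]
    · exact R1
    · exact R2
  · intro h x y T hC
    have hA1 := relA hC 0 q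
    have hA2 := relA hC 0 (q+2)
    have hA3 := relA hC 2 q
    have hB := relB hC 1 q
    simp only [show (0:ℕ)+3 = 3 from rfl, show (0:ℕ)+1 = 1 from rfl, show (0:ℕ)-1 = 0 from rfl,
      show (2:ℕ)+3 = 5 from rfl, show (2:ℕ)+1 = 3 from rfl, show (2:ℕ)-1 = 1 from rfl,
      show (1:ℕ)+2 = 3 from rfl, show (1:ℕ)+4 = 5 from rfl,
      show q+2+2 = q+4 from rfl, show q+2+4 = q+6 from rfl] at hA1 hA2 hA3 hB
    have key : (((q:ℝ)+2)*((q:ℝ)+6)*(b^2 - 4*a*c)) * lineInt x y T 1 (q+4)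
        = (-(((q:ℝ)+2)*((q:ℝ)+4)) + (-(4*a*((q:ℝ)+2)*((q:ℝ)+4))) * h) * lineInt x y T 1 q
          + (-(2*((q:ℝ)+3)*((q:ℝ)+4)*(b+2*a))) * lineInt x y T 1 (q+2) := by
      linear_combination (norm := (push_cast; ring1)) (1/2) * hA1 + (b/2) * hA2 + a * hA3
        + (-(4*a*((q:ℝ)+2)*((q:ℝ)+4))) * hB
    have key2 : lineInt x y T 1 (q+4)
        = (((q:ℝ)+2)*((q:ℝ)+6)*(b^2 - 4*a*c))⁻¹
          * ((-(((q:ℝ)+2)*((q:ℝ)+4)) + (-(4*a*((q:ℝ)+2)*((q:ℝ)+4))) * h) * lineInt x y T 1 q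
            + (-(2*((q:ℝ)+3)*((q:ℝ)+4)*(b+2*a))) * lineInt x y T 1 (q+2)) := by
      rw [← key, inv_mul_cancel_left₀ hK]
    simp only [Fin.sum_univ_two, Matrix.cons_val_zero, Matrix.cons_val_one, Matrix.head_cons,
      Polynomial.eval_add, Polynomial.eval_mul, Polynomial.eval_C, Polynomial.eval_X,
      Fin.isValue]
    linear_combination key2

lemma branchUPRE (hc : c ≠ 0) (q : ℕ) (hq : q ≤ 1)
    (R1 : Red a b c 0 q) (R2 : Red a b c 0 (q+2)) (R3 : Red a b c 2 q) :
    Red a b c 0 (q+4) := by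
  have hK : (2*c*((q:ℝ)+2)*((q:ℝ)+5)) ≠ 0 := by
    have h2 : ((q:ℝ)+2) ≠ 0 := by positivity
    have h5 : ((q:ℝ)+5) ≠ 0 := by positivity
    have : (2:ℝ)*c ≠ 0 := by simpa using hc
    exact mul_ne_zero (mul_ne_zero this h2) h5
  refine red_of_rel 0 (q+4) (Finset.univ : Finset (Fin 4))
    ![Polynomial.C ((2*c*((q:ℝ)+2)*((q:ℝ)+5))⁻¹ * (2*((q:ℝ)+2)*((q:ℝ)+4))) * Polynomial.X,
      Polynomial.C ((2*c*((q:ℝ)+2)*((q:ℝ)+5))⁻¹ * (((q:ℝ)+4)*(2*(q:ℝ)+5))),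
      Polynomial.C ((2*c*((q:ℝ)+2)*((q:ℝ)+5))⁻¹ * (-(((q:ℝ)+2)*((q:ℝ)+4)))),
      Polynomial.C ((2*c*((q:ℝ)+2)*((q:ℝ)+5))⁻¹ * (-(b*((q:ℝ)+4)*((q:ℝ)+5))))]
    ![0, 0, 2, 2] ![q, q+2, q, q+2] ?_ ?_ ?_
  · intro k _ m hm
    fin_cases k <;>
      simp only [Matrix.cons_val_zero, Matrix.cons_val_one, Matrix.head_cons,
        Matrix.cons_val_two, Matrix.cons_val_three, Matrix.tail_cons, Fin.isValue,
        Fin.zero_eta, Fin.mk_one, Fin.reduceFinMk] at hm ⊢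
    · have := cmulx_support hm; omega
    · have := const_support hm; omega
    · have := const_support hm; omega
    · have := const_support hm; omega
  · intro k _ _
    fin_cases k <;>
      simp only [Matrix.cons_val_zero, Matrix.cons_val_one, Matrix.head_cons,
        Matrix.cons_val_two, Matrix.cons_val_three, Matrix.tail_cons, Fin.isValue,
        Fin.zero_eta, Fin.mk_one, Fin.reduceFinMk]
    · exact R1
    · exact R2
    · exact R3
    · exact red_basis 2 (q+2) le_rfl (by omega) (by omega)
  · intro h x y T hC
    have hA := relA hC 1 q
    have hB := relB hC 0 q
    simp only [show (1:ℕ)+3 = 4 from rfl, show (1:ℕ)+1 = 2 from rfl, show (1:ℕ)-1 = 0 from rfl,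
      show (0:ℕ)+2 = 2 from rfl, show (0:ℕ)+4 = 4 from rfl] at hA hB
    have key : (2*c*((q:ℝ)+2)*((q:ℝ)+5)) * lineInt x y T 0 (q+4)
        = ((2*((q:ℝ)+2)*((q:ℝ)+4)) * h) * lineInt x y T 0 q
          + (((q:ℝ)+4)*(2*(q:ℝ)+5)) * lineInt x y T 0 (q+2)
          + (-(((q:ℝ)+2)*((q:ℝ)+4))) * lineInt x y T 2 q
          + (-(b*((q:ℝ)+4)*((q:ℝ)+5))) * lineInt x y T 2 (q+2) := by
      linear_combination (norm := (push_cast; ring1)) (-(1:ℝ)/2) * hA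
        + (2*((q:ℝ)+2)*((q:ℝ)+4)) * hB
    have key2 : lineInt x y T 0 (q+4)
        = (2*c*((q:ℝ)+2)*((q:ℝ)+5))⁻¹
          * (((2*((q:ℝ)+2)*((q:ℝ)+4)) * h) * lineInt x y T 0 q
            + (((q:ℝ)+4)*(2*(q:ℝ)+5)) * lineInt x y T 0 (q+2)
            + (-(((q:ℝ)+2)*((q:ℝ)+4))) * lineInt x y T 2 q
            + (-(b*((q:ℝ)+4)*((q:ℝ)+5))) * lineInt x y T 2 (q+2)) := by
      rw [← key, inv_mul_cancel_left₀ hK]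
    simp only [Fin.sum_univ_four, Matrix.cons_val_zero, Matrix.cons_val_one, Matrix.head_cons,
      Matrix.cons_val_two, Matrix.cons_val_three, Matrix.tail_cons,
      Polynomial.eval_add, Polynomial.eval_mul, Polynomial.eval_C, Polynomial.eval_X,
      Fin.isValue]
    linear_combination key2

lemma branchEVENU (hc : c ≠ 0) (hD : b^2 - 4*a*c ≠ 0) (r : ℕ)
    (R1 : Red a b c 0 (r+2)) (R2 : Red a b c 0 (r+4))
    (R3 : Red a b c 2 r) (R4 : Red a b c 2 (r+2)) :
    Red a b c 0 (r+6) := by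
  have hK : (2*c*((r:ℝ)+2)*((r:ℝ)+4)*((r:ℝ)+7)*(b^2 - 4*a*c)) ≠ 0 := by
    have h2 : ((r:ℝ)+2) ≠ 0 := by positivity
    have h4 : ((r:ℝ)+4) ≠ 0 := by positivity
    have h7 : ((r:ℝ)+7) ≠ 0 := by positivity
    have h2c : (2:ℝ)*c ≠ 0 := by simpa using hc
    exact mul_ne_zero (mul_ne_zero (mul_ne_zero (mul_ne_zero h2c h2) h4) h7) hD
  refine red_of_rel 0 (r+6) (Finset.univ : Finset (Fin 4))
    ![Polynomial.C ((2*c*((r:ℝ)+2)*((r:ℝ)+4)*((r:ℝ)+7)*(b^2 - 4*a*c))⁻¹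
          * (b*((r:ℝ)+4)*((r:ℝ)+6)))
        + Polynomial.C ((2*c*((r:ℝ)+2)*((r:ℝ)+4)*((r:ℝ)+7)*(b^2 - 4*a*c))⁻¹
          * (((r:ℝ)+4)*((r:ℝ)+6)*(2*b^2*((r:ℝ)+1) - 8*a*c*((r:ℝ)+2)))) * Polynomial.X,
      Polynomial.C ((2*c*((r:ℝ)+2)*((r:ℝ)+4)*((r:ℝ)+7)*(b^2 - 4*a*c))⁻¹
          * (-(2*((r:ℝ)+2)*((r:ℝ)+6)*(b*c - b^2*((r:ℝ)+4) + 2*a*c*(2*(r:ℝ)+9))))),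
      Polynomial.C ((2*c*((r:ℝ)+2)*((r:ℝ)+4)*((r:ℝ)+7)*(b^2 - 4*a*c))⁻¹
          * (b*((r:ℝ)+2)*((r:ℝ)+4)*((r:ℝ)+6)))
        + Polynomial.C ((2*c*((r:ℝ)+2)*((r:ℝ)+4)*((r:ℝ)+7)*(b^2 - 4*a*c))⁻¹
          * (4*a*b*((r:ℝ)+2)*((r:ℝ)+4)*((r:ℝ)+6))) * Polynomial.X,
      Polynomial.C ((2*c*((r:ℝ)+2)*((r:ℝ)+4)*((r:ℝ)+7)*(b^2 - 4*a*c))⁻¹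
          * (((r:ℝ)+4)*((r:ℝ)+6)*(b^2*((r:ℝ)+5) + 2*a*b*(2*(r:ℝ)+7) + 4*a*c*((r:ℝ)+2))))]
    ![0, 0, 2, 2] ![r+2, r+4, r, r+2] ?_ ?_ ?_
  · intro k _ m hm
    fin_cases k <;>
      simp only [Matrix.cons_val_zero, Matrix.cons_val_one, Matrix.head_cons,
        Matrix.cons_val_two, Matrix.cons_val_three, Matrix.tail_cons, Fin.isValue,
        Fin.zero_eta, Fin.mk_one, Fin.reduceFinMk] at hm ⊢
    · have := affine_support hm; omega
    · have := const_support hm; omega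
    · have := affine_support hm; omega
    · have := const_support hm; omega
  · intro k _ _
    fin_cases k <;>
      simp only [Matrix.cons_val_zero, Matrix.cons_val_one, Matrix.head_cons,
        Matrix.cons_val_two, Matrix.cons_val_three, Matrix.tail_cons, Fin.isValue,
        Fin.zero_eta, Fin.mk_one, Fin.reduceFinMk]
    · exact R1
    · exact R2
    · exact R3
    · exact R4
  · intro h x y T hC
    have hA1 := relA hC 1 r
    have hA2 := relA hC 1 (r+2)
    have hA3 := relA hC 3 r
    have hB1 := relB hC 0 (r+2)
    have hB2 := relB hC 2 r
    simp only [show (1:ℕ)+3 = 4 from rfl, show (1:ℕ)+1 = 2 from rfl, show (1:ℕ)-1 = 0 from rfl,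
      show (3:ℕ)+3 = 6 from rfl, show (3:ℕ)+1 = 4 from rfl, show (3:ℕ)-1 = 2 from rfl,
      show (0:ℕ)+2 = 2 from rfl, show (0:ℕ)+4 = 4 from rfl,
      show (2:ℕ)+2 = 4 from rfl, show (2:ℕ)+4 = 6 from rfl,
      show r+2+2 = r+4 from rfl, show r+2+4 = r+6 from rfl] at hA1 hA2 hA3 hB1 hB2
    have key : (2*c*((r:ℝ)+2)*((r:ℝ)+4)*((r:ℝ)+7)*(b^2 - 4*a*c)) * lineInt x y T 0 (r+6)
        = (b*((r:ℝ)+4)*((r:ℝ)+6)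
            + (((r:ℝ)+4)*((r:ℝ)+6)*(2*b^2*((r:ℝ)+1) - 8*a*c*((r:ℝ)+2))) * h)
              * lineInt x y T 0 (r+2)
          + (-(2*((r:ℝ)+2)*((r:ℝ)+6)*(b*c - b^2*((r:ℝ)+4) + 2*a*c*(2*(r:ℝ)+9))))
              * lineInt x y T 0 (r+4)
          + (b*((r:ℝ)+2)*((r:ℝ)+4)*((r:ℝ)+6)
            + (4*a*b*((r:ℝ)+2)*((r:ℝ)+4)*((r:ℝ)+6)) * h) * lineInt x y T 2 r
          + (((r:ℝ)+4)*((r:ℝ)+6)*(b^2*((r:ℝ)+5) + 2*a*b*(2*(r:ℝ)+7) + 4*a*c*((r:ℝ)+2)))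
              * lineInt x y T 2 (r+2) := by
      linear_combination (norm := (push_cast; ring1))
        (-(b*((r:ℝ)+6))/2) * hA1 + (-(b^2*((r:ℝ)+4)) + 2*a*c*((r:ℝ)+2)) * hA2
          + (-(a*b*((r:ℝ)+6))) * hA3
          + (2*((r:ℝ)+4)*((r:ℝ)+6)*(b^2*((r:ℝ)+1) - 4*a*c*((r:ℝ)+2))) * hB1
          + (4*a*b*((r:ℝ)+2)*((r:ℝ)+4)*((r:ℝ)+6)) * hB2
    have key2 : lineInt x y T 0 (r+6)
        = (2*c*((r:ℝ)+2)*((r:ℝ)+4)*((r:ℝ)+7)*(b^2 - 4*a*c))⁻¹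
          * ((b*((r:ℝ)+4)*((r:ℝ)+6)
            + (((r:ℝ)+4)*((r:ℝ)+6)*(2*b^2*((r:ℝ)+1) - 8*a*c*((r:ℝ)+2))) * h)
              * lineInt x y T 0 (r+2)
          + (-(2*((r:ℝ)+2)*((r:ℝ)+6)*(b*c - b^2*((r:ℝ)+4) + 2*a*c*(2*(r:ℝ)+9))))
              * lineInt x y T 0 (r+4)
          + (b*((r:ℝ)+2)*((r:ℝ)+4)*((r:ℝ)+6)
            + (4*a*b*((r:ℝ)+2)*((r:ℝ)+4)*((r:ℝ)+6)) * h) * lineInt x y T 2 r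
          + (((r:ℝ)+4)*((r:ℝ)+6)*(b^2*((r:ℝ)+5) + 2*a*b*(2*(r:ℝ)+7) + 4*a*c*((r:ℝ)+2)))
              * lineInt x y T 2 (r+2)) := by
      rw [← key, inv_mul_cancel_left₀ hK]
    simp only [Fin.sum_univ_four, Matrix.cons_val_zero, Matrix.cons_val_one, Matrix.head_cons,
      Matrix.cons_val_two, Matrix.cons_val_three, Matrix.tail_cons,
      Polynomial.eval_add, Polynomial.eval_mul, Polynomial.eval_C, Polynomial.eval_X,
      Fin.isValue]
    linear_combination key2

lemma branchEVENV (hD : b^2 - 4*a*c ≠ 0) (q : ℕ)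
    (R1 : Red a b c 0 (q+2)) (R2 : Red a b c 0 (q+4))
    (R3 : Red a b c 2 q) (R4 : Red a b c 2 (q+2)) :
    Red a b c 2 (q+4) := by
  have hK : (((q:ℝ)+2)*((q:ℝ)+7)*(b^2 - 4*a*c)) ≠ 0 := by
    have h2 : ((q:ℝ)+2) ≠ 0 := by positivity
    have h7 : ((q:ℝ)+7) ≠ 0 := by positivity
    exact mul_ne_zero (mul_ne_zero h2 h7) hD
  refine red_of_rel 2 (q+4) (Finset.univ : Finset (Fin 4))
    ![Polynomial.C ((((q:ℝ)+2)*((q:ℝ)+7)*(b^2 - 4*a*c))⁻¹ * (-((q:ℝ)+4)))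
        + Polynomial.C ((((q:ℝ)+2)*((q:ℝ)+7)*(b^2 - 4*a*c))⁻¹ * (2*b*((q:ℝ)+4)))
          * Polynomial.X,
      Polynomial.C ((((q:ℝ)+2)*((q:ℝ)+7)*(b^2 - 4*a*c))⁻¹ * (((q:ℝ)+2)*(b+2*c))),
      Polynomial.C ((((q:ℝ)+2)*((q:ℝ)+7)*(b^2 - 4*a*c))⁻¹ * (-(((q:ℝ)+2)*((q:ℝ)+4))))
        + Polynomial.C ((((q:ℝ)+2)*((q:ℝ)+7)*(b^2 - 4*a*c))⁻¹ * (-(4*a*((q:ℝ)+2)*((q:ℝ)+4))))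
          * Polynomial.X,
      Polynomial.C ((((q:ℝ)+2)*((q:ℝ)+7)*(b^2 - 4*a*c))⁻¹ * (-(((q:ℝ)+4)*(2*(q:ℝ)+7)*(b+2*a))))]
    ![0, 0, 2, 2] ![q+2, q+4, q, q+2] ?_ ?_ ?_
  · intro k _ m hm
    fin_cases k <;>
      simp only [Matrix.cons_val_zero, Matrix.cons_val_one, Matrix.head_cons,
        Matrix.cons_val_two, Matrix.cons_val_three, Matrix.tail_cons, Fin.isValue,
        Fin.zero_eta, Fin.mk_one, Fin.reduceFinMk] at hm ⊢
    · have := affine_support hm; omega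
    · have := const_support hm; omega
    · have := affine_support hm; omega
    · have := const_support hm; omega
  · intro k _ _
    fin_cases k <;>
      simp only [Matrix.cons_val_zero, Matrix.cons_val_one, Matrix.head_cons,
        Matrix.cons_val_two, Matrix.cons_val_three, Matrix.tail_cons, Fin.isValue,
        Fin.zero_eta, Fin.mk_one, Fin.reduceFinMk]
    · exact R1
    · exact R2
    · exact R3
    · exact R4
  · intro h x y T hC
    have hA1 := relA hC 1 q
    have hA2 := relA hC 1 (q+2)
    have hA3 := relA hC 3 q
    have hB1 := relB hC 0 (q+2)
    have hB2 := relB hC 2 q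
    simp only [show (1:ℕ)+3 = 4 from rfl, show (1:ℕ)+1 = 2 from rfl, show (1:ℕ)-1 = 0 from rfl,
      show (3:ℕ)+3 = 6 from rfl, show (3:ℕ)+1 = 4 from rfl, show (3:ℕ)-1 = 2 from rfl,
      show (0:ℕ)+2 = 2 from rfl, show (0:ℕ)+4 = 4 from rfl,
      show (2:ℕ)+2 = 4 from rfl, show (2:ℕ)+4 = 6 from rfl,
      show q+2+2 = q+4 from rfl, show q+2+4 = q+6 from rfl] at hA1 hA2 hA3 hB1 hB2
    have key : (((q:ℝ)+2)*((q:ℝ)+7)*(b^2 - 4*a*c)) * lineInt x y T 2 (q+4)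
        = (-((q:ℝ)+4) + (2*b*((q:ℝ)+4)) * h) * lineInt x y T 0 (q+2)
          + (((q:ℝ)+2)*(b+2*c)) * lineInt x y T 0 (q+4)
          + (-(((q:ℝ)+2)*((q:ℝ)+4)) + (-(4*a*((q:ℝ)+2)*((q:ℝ)+4))) * h) * lineInt x y T 2 q
          + (-(((q:ℝ)+4)*(2*(q:ℝ)+7)*(b+2*a))) * lineInt x y T 2 (q+2) := by
      linear_combination (norm := (push_cast; ring1))
        (1/2) * hA1 + (b/2) * hA2 + a * hA3 + (2*b*((q:ℝ)+4)) * hB1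
          + (-(4*a*((q:ℝ)+2)*((q:ℝ)+4))) * hB2
    have key2 : lineInt x y T 2 (q+4)
        = (((q:ℝ)+2)*((q:ℝ)+7)*(b^2 - 4*a*c))⁻¹
          * ((-((q:ℝ)+4) + (2*b*((q:ℝ)+4)) * h) * lineInt x y T 0 (q+2)
          + (((q:ℝ)+2)*(b+2*c)) * lineInt x y T 0 (q+4)
          + (-(((q:ℝ)+2)*((q:ℝ)+4)) + (-(4*a*((q:ℝ)+2)*((q:ℝ)+4))) * h) * lineInt x y T 2 q
          + (-(((q:ℝ)+4)*(2*(q:ℝ)+7)*(b+2*a))) * lineInt x y T 2 (q+2)) := by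
      rw [← key, inv_mul_cancel_left₀ hK]
    simp only [Fin.sum_univ_four, Matrix.cons_val_zero, Matrix.cons_val_one, Matrix.head_cons,
      Matrix.cons_val_two, Matrix.cons_val_three, Matrix.tail_cons,
      Polynomial.eval_add, Polynomial.eval_mul, Polynomial.eval_C, Polynomial.eval_X,
      Fin.isValue]
    linear_combination key2

end Branches

theorem redAll {a b c : ℝ} (ha : a ≠ 0) (hc : c ≠ 0) (hD : b^2 - 4*a*c ≠ 0) :
    ∀ i j, Red a b c i j := by
  have H : ∀ N i j, (i+j)*((i+j)+1) + i < N → Red a b c i j := by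
    intro N
    induction N with
    | zero => intro i j hij; omega
    | succ N IH =>
      intro i j hij
      have REC : ∀ i' j', (i'+j')*((i'+j')+1) + i' < (i+j)*((i+j)+1) + i →
          Red a b c i' j' := fun i' j' hlt => IH i' j' (by omega)
      rcases Nat.eq_zero_or_pos j with hj0 | hj1
      · subst hj0; exact red_zero i
      by_cases hi3 : 3 ≤ i
      · obtain ⟨i', rfl⟩ : ∃ i', i = i'+3 := ⟨i-3, by omega⟩
        exact branchA ha i' j
          (REC _ _ (mu_lt_left (by omega)))
          (REC _ _ (mu_lt_right (by omega) (by omega)))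
          (fun hi' => REC _ _ (mu_lt_left (by omega)))
          (fun hi' => REC _ _ (mu_lt_right (by omega) (by omega)))
      · push_neg at hi3
        by_cases hj4 : j ≤ 3
        · exact red_basis i j (by omega) hj1 hj4
        · obtain ⟨q, rfl⟩ : ∃ q, j = q+4 := ⟨j-4, by omega⟩
          interval_cases i
          · by_cases hq1 : q ≤ 1
            · exact branchUPRE hc q hq1
                (REC _ _ (mu_lt_left (by omega)))
                (REC _ _ (mu_lt_left (by omega)))
                (REC _ _ (mu_lt_left (by omega)))
            · obtain ⟨r, rfl⟩ : ∃ r, q = r+2 := ⟨q-2, by omega⟩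
              exact branchEVENU hc hD r
                (REC _ _ (mu_lt_left (by omega)))
                (REC _ _ (mu_lt_left (by omega)))
                (REC _ _ (mu_lt_left (by omega)))
                (REC _ _ (mu_lt_left (by omega)))
          · exact branchODD hD q
              (REC _ _ (mu_lt_left (by omega)))
              (REC _ _ (mu_lt_left (by omega)))
          · exact branchEVENV hD q
              (REC _ _ (mu_lt_left (by omega)))
              (REC _ _ (mu_lt_left (by omega)))
              (REC _ _ (mu_lt_left (by omega)))
              (REC _ _ (mu_lt_left (by omega)))
  exact fun i j => H ((i+j)*((i+j)+1) + i + 1) i j (by omega)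

section Expand

variable {a b c h : ℝ} {x y : ℝ → ℝ} {T : ℝ}

lemma eval_pt (P : MvPolynomial (Fin 2) ℝ) (u : ℝ → ℝ) (t : ℝ) :
    MvPolynomial.eval ![x t, y t] P * u t
      = ∑ m ∈ P.support, MvPolynomial.coeff m P * (x t ^ m 0 * y t ^ m 1 * u t) := by
  rw [MvPolynomial.eval_eq', Finset.sum_mul]
  refine Finset.sum_congr rfl fun m _ => ?_
  rw [Fin.prod_univ_two]
  simp only [Matrix.cons_val_zero, Matrix.cons_val_one, Matrix.head_cons]
  ring

lemma cont_evalg (hC : IsCurve a b c h x y T) (P : MvPolynomial (Fin 2) ℝ) (w : ℝ → ℝ)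
    (hw : Continuous (deriv w)) :
    Continuous fun t => MvPolynomial.eval ![x t, y t] P * deriv w t := by
  have : (fun t => MvPolynomial.eval ![x t, y t] P * deriv w t)
      = fun t => ∑ m ∈ P.support, MvPolynomial.coeff m P
          * (x t ^ m 0 * y t ^ m 1 * deriv w t) := funext fun t => eval_pt P (deriv w) t
  rw [this]
  exact continuous_finset_sum _ fun m _ => continuous_const.mul
    (((hC.cx.pow _).mul (hC.cy.pow _)).mul hw)

lemma integral_expandX (hC : IsCurve a b c h x y T) (P : MvPolynomial (Fin 2) ℝ) :
    (∫ t in (0:ℝ)..T, MvPolynomial.eval ![x t, y t] P * deriv x t)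
      = ∑ m ∈ P.support, MvPolynomial.coeff m P * lineInt x y T (m 0) (m 1) := by
  simp only [eval_pt P (deriv x)]
  refine (intervalIntegral.integral_finset_sum (μ := MeasureTheory.volume) (a := (0:ℝ))
      (b := T) (s := P.support)
      (f := fun m t => MvPolynomial.coeff m P * (x t ^ m 0 * y t ^ m 1 * deriv x t))
      (fun m _ =>
        (continuous_const.mul (hC.contI (m 0) (m 1) true)).intervalIntegrable 0 T)).trans ?_
  exact Finset.sum_congr rfl fun m _ => intervalIntegral.integral_const_mul _ _

lemma integral_expandY (hC : IsCurve a b c h x y T) (P : MvPolynomial (Fin 2) ℝ) :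
    (∫ t in (0:ℝ)..T, MvPolynomial.eval ![x t, y t] P * deriv y t)
      = ∑ m ∈ P.support, MvPolynomial.coeff m P * lineIntY x y T (m 0) (m 1) := by
  simp only [eval_pt P (deriv y)]
  refine (intervalIntegral.integral_finset_sum (μ := MeasureTheory.volume) (a := (0:ℝ))
      (b := T) (s := P.support)
      (f := fun m t => MvPolynomial.coeff m P * (x t ^ m 0 * y t ^ m 1 * deriv y t))
      (fun m _ =>
        (continuous_const.mul (hC.contI (m 0) (m 1) false)).intervalIntegrable 0 T)).trans ?_
  exact Finset.sum_congr rfl fun m _ => intervalIntegral.integral_const_mul _ _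

lemma integral_expand_full (hC : IsCurve a b c h x y T) (f g : MvPolynomial (Fin 2) ℝ) :
    (∫ t in (0:ℝ)..T, (MvPolynomial.eval ![x t, y t] g * deriv x t
        - MvPolynomial.eval ![x t, y t] f * deriv y t))
      = (∑ m ∈ g.support, (Polynomial.C (MvPolynomial.coeff m g)).eval h
            * lineInt x y T (m 0) (m 1))
        + ∑ m ∈ f.support,
            (Polynomial.C (MvPolynomial.coeff m f * ((m 0 : ℝ) / ((m 1 : ℝ)+1)))).eval h
              * lineInt x y T (m 0 - 1) (m 1 + 1) := by
  rw [intervalIntegral.integral_sub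
    ((cont_evalg hC g x hC.cdx).intervalIntegrable 0 T)
    ((cont_evalg hC f y hC.cdy).intervalIntegrable 0 T),
    integral_expandX hC g, integral_expandY hC f]
  simp only [Polynomial.eval_C]
  rw [sub_eq_add_neg, ← Finset.sum_neg_distrib]
  congr 1
  refine Finset.sum_congr rfl fun m _ => ?_
  rw [JY_eq hC (m 0) (m 1)]
  ring

end Expand

theorem stmt7 (a b c : ℝ) (habc : a * c * (b ^ 2 - 4 * a * c) ≠ 0)
    (n : ℕ) (hn : 1 ≤ n)
    (f g : MvPolynomial (Fin 2) ℝ)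
    (hf : f.totalDegree ≤ n) (hg : g.totalDegree ≤ n) :
    ∃ f1 f2 f3 f4 f5 g1 g2 l1 l2 : Polynomial ℝ,
      f1.degree ≤ (((n - 1) / 4 : ℕ) : WithBot ℕ) ∧
      f2.degree < (((n + 1) / 4 : ℕ) : WithBot ℕ) ∧
      f3.degree < (((n + 1) / 4 : ℕ) : WithBot ℕ) ∧
      f5.degree < (((n + 1) / 4 : ℕ) : WithBot ℕ) ∧
      f4.degree < (((n - 1) / 4 : ℕ) : WithBot ℕ) ∧
      g1.degree < (((n + 2) / 4 : ℕ) : WithBot ℕ) ∧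
      l1.degree < (((n + 2) / 4 : ℕ) : WithBot ℕ) ∧
      g2.degree < ((n / 4 : ℕ) : WithBot ℕ) ∧
      l2.degree < ((n / 4 : ℕ) : WithBot ℕ) ∧
      ∀ (h : ℝ) (x y : ℝ → ℝ) (T : ℝ), 0 < T →
        ContDiff ℝ 1 x → ContDiff ℝ 1 y →
        (∀ t : ℝ, x (t + T) = x t ∧ y (t + T) = y t) →
        (∀ t : ℝ, Hfun a b c (x t) (y t) = h) →
        (∫ t in (0:ℝ)..T, (MvPolynomial.eval ![x t, y t] g * deriv x t
            - MvPolynomial.eval ![x t, y t] f * deriv y t)) =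
          f1.eval h * lineInt x y T 0 1 + f2.eval h * lineInt x y T 0 3
          + f3.eval h * lineInt x y T 2 1 + f4.eval h * lineInt x y T 2 3
          + f5.eval h * lineInt x y T 1 2
          + g1.eval h * lineInt x y T 1 1 + g2.eval h * lineInt x y T 1 3
          + l1.eval h * lineInt x y T 0 2 + l2.eval h * lineInt x y T 2 2 := by
  classical
  have ha : a ≠ 0 := fun h0 => habc (by rw [h0]; ring)
  have hc : c ≠ 0 := fun h0 => habc (by rw [h0]; ring)
  have hD : b^2 - 4*a*c ≠ 0 := fun h0 => habc (by rw [h0]; ring)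
  have hsum2 : ∀ m : Fin 2 →₀ ℕ, (m.sum fun _ e => e) = m 0 + m 1 := by
    intro m
    rw [Finsupp.sum_fintype]
    · exact Fin.sum_univ_two _
    · intro i; rfl
  obtain ⟨Ag, hAgOK, hAgid⟩ := fam_sum (a := a) (b := b) (c := c) g.support n
    (fun m => Polynomial.C (MvPolynomial.coeff m g)) (fun m => m 0) (fun m => m 1)
    (by
      intro m hm k hk
      have hk0 := const_support hk
      subst hk0
      have h1 := MvPolynomial.le_totalDegree hm
      rw [hsum2 m] at h1
      beta_reduce
      omega)
    (fun m _ _ => redAll ha hc hD _ _)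
  obtain ⟨Af, hAfOK, hAfid⟩ := fam_sum (a := a) (b := b) (c := c) f.support n
    (fun m => Polynomial.C (MvPolynomial.coeff m f * ((m 0 : ℝ) / ((m 1 : ℝ)+1))))
    (fun m => m 0 - 1) (fun m => m 1 + 1)
    (by
      intro m hm k hk
      have hk0 := const_support hk
      subst hk0
      beta_reduce at hk ⊢
      by_cases hm0 : m 0 = 0
      · rw [hm0] at hk
        simp at hk
      · have h1 := MvPolynomial.le_totalDegree hm
        rw [hsum2 m] at h1
        omega)
    (fun m _ _ => redAll ha hc hD _ _)
  have hAOK : ∀ (p q : Fin 3) (k : ℕ), (Ag p q + Af p q).coeff k ≠ 0 →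
      4*k + (p:ℕ) + (q:ℕ) + 1 ≤ n := by
    intro p q k hk
    rcases (by by_contra hcon; push_neg at hcon
               rw [Polynomial.coeff_add, hcon.1, hcon.2, add_zero] at hk
               exact hk rfl :
        (Ag p q).coeff k ≠ 0 ∨ (Af p q).coeff k ≠ 0) with h1 | h2
    · exact hAgOK p q k h1
    · exact hAfOK p q k h2
  refine ⟨Ag 0 0 + Af 0 0, Ag 0 2 + Af 0 2, Ag 2 0 + Af 2 0, Ag 2 2 + Af 2 2,
    Ag 1 1 + Af 1 1, Ag 1 0 + Af 1 0, Ag 1 2 + Af 1 2, Ag 0 1 + Af 0 1,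
    Ag 2 1 + Af 2 1, ?_, ?_, ?_, ?_, ?_, ?_, ?_, ?_, ?_, ?_⟩
  · rw [Polynomial.degree_le_iff_coeff_zero]
    intro k hklt
    by_contra hne
    have hb := hAOK 0 0 k hne
    simp only [Fin.val_zero] at hb
    have hk' : (n-1)/4 < k := by exact_mod_cast hklt
    omega
  · rw [show ((((n + 1) / 4 : ℕ)) : WithBot ℕ) = (((n + 1) / 4 : ℕ) : ℕ) from rfl,
      Polynomial.degree_lt_iff_coeff_zero]
    intro k hklt
    by_contra hne
    have hb := hAOK 0 2 k hne
    simp only [Fin.val_zero, show ((2 : Fin 3):ℕ) = 2 from rfl] at hb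
    omega
  · rw [show ((((n + 1) / 4 : ℕ)) : WithBot ℕ) = (((n + 1) / 4 : ℕ) : ℕ) from rfl,
      Polynomial.degree_lt_iff_coeff_zero]
    intro k hklt
    by_contra hne
    have hb := hAOK 2 0 k hne
    simp only [Fin.val_zero, show ((2 : Fin 3):ℕ) = 2 from rfl] at hb
    omega
  · rw [show ((((n + 1) / 4 : ℕ)) : WithBot ℕ) = (((n + 1) / 4 : ℕ) : ℕ) from rfl,
      Polynomial.degree_lt_iff_coeff_zero]
    intro k hklt
    by_contra hne
    have hb := hAOK 1 1 k hne
    simp only [Fin.val_one] at hb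
    omega
  · rw [show ((((n - 1) / 4 : ℕ)) : WithBot ℕ) = (((n - 1) / 4 : ℕ) : ℕ) from rfl,
      Polynomial.degree_lt_iff_coeff_zero]
    intro k hklt
    by_contra hne
    have hb := hAOK 2 2 k hne
    simp only [show ((2 : Fin 3):ℕ) = 2 from rfl] at hb
    omega
  · rw [show ((((n + 2) / 4 : ℕ)) : WithBot ℕ) = (((n + 2) / 4 : ℕ) : ℕ) from rfl,
      Polynomial.degree_lt_iff_coeff_zero]
    intro k hklt
    by_contra hne
    have hb := hAOK 1 0 k hne
    simp only [Fin.val_zero, Fin.val_one] at hb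
    omega
  · rw [show ((((n + 2) / 4 : ℕ)) : WithBot ℕ) = (((n + 2) / 4 : ℕ) : ℕ) from rfl,
      Polynomial.degree_lt_iff_coeff_zero]
    intro k hklt
    by_contra hne
    have hb := hAOK 0 1 k hne
    simp only [Fin.val_zero, Fin.val_one] at hb
    omega
  · rw [show (((n / 4 : ℕ)) : WithBot ℕ) = (((n / 4 : ℕ)) : ℕ) from rfl,
      Polynomial.degree_lt_iff_coeff_zero]
    intro k hklt
    by_contra hne
    have hb := hAOK 1 2 k hne
    simp only [Fin.val_one, show ((2 : Fin 3):ℕ) = 2 from rfl] at hb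
    omega
  · rw [show (((n / 4 : ℕ)) : WithBot ℕ) = (((n / 4 : ℕ)) : ℕ) from rfl,
      Polynomial.degree_lt_iff_coeff_zero]
    intro k hklt
    by_contra hne
    have hb := hAOK 2 1 k hne
    simp only [Fin.val_one, show ((2 : Fin 3):ℕ) = 2 from rfl] at hb
    omega
  · intro h x y T hT hx hy hper hlvl
    have hC : IsCurve a b c h x y T := ⟨hx, hy, hper, hlvl⟩
    rw [integral_expand_full hC f g, hAgid h x y T hC, hAfid h x y T hC]
    simp only [evalFam, Fin.sum_univ_three, Polynomial.eval_add, Fin.val_zero, Fin.val_one,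
      show ((2 : Fin 3):ℕ) = 2 from rfl, show (0:ℕ)+1 = 1 from rfl,
      show (1:ℕ)+1 = 2 from rfl, show (2:ℕ)+1 = 3 from rfl]
    ring
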